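/- If θ/π is irrational, then for every interval [a,b] ⊆ [-1,1], lim_{N→∞} (1/N)·#{n ≤ N : cos(nθ) ∈ [a,b]} = (1/π) ∫_a^b dt/√(1−t²) = (arcsin(b) − arcsin(a))/π. -/

import Mathlib

open Real Set Filter

open MeasureTheory Complex

noncomputable section

local instance fact2pi : Fact (0 < 2 * π) := ⟨by positivity⟩

abbrev 𝕋 := AddCircle (2 * π)

lemma weyl_exp (θ : ℝ) (hθ : Irrational (θ / π)) (k : ℤ) (hk : k ≠ 0) :
    Tendsto (fun N : ℕ => (∑ n ∈ Finset.Icc 1 N, fourier k ((n * θ : ℝ) : 𝕋)) / (N : ℂ))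
      atTop (nhds 0) := by
  have hπ : (π : ℝ) ≠ 0 := Real.pi_ne_zero
  set z : ℂ := Complex.exp ((k * θ : ℝ) * Complex.I) with hz
  have habs : ‖z‖ = 1 := Complex.norm_exp_ofReal_mul_I _
  have hz1 : z ≠ 1 := by
    intro h
    rw [hz, Complex.exp_eq_one_iff] at h
    obtain ⟨m, hm⟩ := h
    have hm' : ((k * θ : ℝ) : ℂ) = ((2 * m * π : ℝ) : ℂ) := by
      apply mul_right_cancel₀ Complex.I_ne_zero
      rw [hm]; push_cast; ring
    have h2 : (k : ℝ) * θ = 2 * m * π := by exact_mod_cast hm'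
    have hk' : (k : ℝ) ≠ 0 := Int.cast_ne_zero.mpr hk
    have : θ / π = ((2 * m / k : ℚ) : ℝ) := by
      push_cast
      rw [div_eq_div_iff hπ hk']
      nlinarith [h2]
    exact hθ ⟨_, this.symm⟩
  have hterm : ∀ n : ℕ, fourier k ((n * θ : ℝ) : 𝕋) = z ^ n := by
    intro n
    rw [fourier_coe_apply, hz, ← Complex.exp_nat_mul]
    congr 1
    have h2π : ((2 * π : ℝ) : ℂ) ≠ 0 := by
      push_cast
      simp [Real.pi_ne_zero]
    rw [div_eq_iff h2π]
    push_cast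
    ring
  simp only [hterm]
  -- geometric sum bound
  have hsum : ∀ N : ℕ, ∑ n ∈ Finset.Icc 1 N, z ^ n = (z ^ (N + 1) - 1) / (z - 1) - 1 := by
    intro N
    have h1 : Finset.Icc 1 N = Finset.range (N + 1) \ {0} := by
      ext n; simp [Nat.lt_succ_iff, Nat.one_le_iff_ne_zero]
      tauto
    rw [h1, Finset.sum_sdiff_eq_sub (by simp), geom_sum_eq hz1]
    simp
  have hbound : ∀ N : ℕ, ‖∑ n ∈ Finset.Icc 1 N, z ^ n‖ ≤ 2 / ‖z - 1‖ + 1 := by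
    intro N
    rw [hsum]
    refine (norm_sub_le _ _).trans ?_
    gcongr
    · rw [norm_div]
      gcongr
      refine (norm_sub_le _ _).trans ?_
      rw [norm_pow]
      simp only [habs]
      norm_num
    · simp
  have key : Tendsto (fun N : ℕ => (2 / ‖z - 1‖ + 1) / (N : ℝ)) atTop (nhds 0) :=
    tendsto_const_nhds.div_atTop tendsto_natCast_atTop_atTop
  rw [tendsto_zero_iff_norm_tendsto_zero]
  refine squeeze_zero (fun N => norm_nonneg _) (fun N => ?_) key
  rw [norm_div]
  rcases Nat.eq_zero_or_pos N with h | h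
  · simp [h]
  · have hN : (0 : ℝ) < N := by exact_mod_cast h
    rw [div_le_div_iff₀ (by simpa using hN) hN]
    · have := hbound N
      have hnn : (0:ℝ) ≤ 2 / ‖z - 1‖ + 1 := by positivity
      simp only [Complex.norm_natCast]
      nlinarith [norm_nonneg (∑ n ∈ Finset.Icc 1 N, z ^ n)]

lemma integrable_cont (f : C(𝕋, ℂ)) : Integrable f (@AddCircle.haarAddCircle (2*π) _) :=
  f.continuous.integrable_of_hasCompactSupport (HasCompactSupport.of_compactSpace f)

lemma weyl_continuous (θ : ℝ) (hθ : Irrational (θ / π)) (f : C(𝕋, ℂ)) :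
    Tendsto (fun N : ℕ => (∑ n ∈ Finset.Icc 1 N, f ((n * θ : ℝ) : 𝕋)) / (N : ℂ))
      atTop (nhds (∫ x, f x ∂(@AddCircle.haarAddCircle (2*π) _))) := by
  set μ := @AddCircle.haarAddCircle (2*π) _
  set P : C(𝕋, ℂ) → Prop := fun g =>
    Tendsto (fun N : ℕ => (∑ n ∈ Finset.Icc 1 N, g ((n * θ : ℝ) : 𝕋)) / (N : ℂ))
      atTop (nhds (∫ x, g x ∂μ)) with hP
  -- P holds on the span of the fourier monomials
  have hspan : ∀ g ∈ Submodule.span ℂ (Set.range (@fourier (2*π))), P g := by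
    intro g hg
    induction hg using Submodule.span_induction with
    | mem g hg =>
      obtain ⟨k, rfl⟩ := hg
      rcases eq_or_ne k 0 with rfl | hk
      · have h1 : ∀ N : ℕ, (∑ n ∈ Finset.Icc 1 N, fourier 0 ((n * θ : ℝ) : 𝕋)) / (N : ℂ)
            = (N : ℂ) / (N : ℂ) := by
          intro N
          congr 1
          simp [fourier_zero]
        have h2 : (∫ x, fourier 0 x ∂μ) = 1 := by
          simp only [fourier_zero]
          simp [μ]
        rw [hP]
        simp only [h1, h2]
        have : Tendsto (fun N : ℕ => (N : ℂ) / (N : ℂ)) atTop (nhds 1) := by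
          apply Tendsto.congr' ?_ tendsto_const_nhds
          filter_upwards [eventually_ne_atTop 0] with N hN
          rw [div_self (by exact_mod_cast hN)]
        exact this
      · have h2 : (∫ x, fourier k x ∂μ) = 0 :=
          integral_eq_zero_of_add_right_eq_neg
            (fourier_add_half_inv_index hk fact2pi.out)
        show Tendsto (fun N : ℕ => (∑ n ∈ Finset.Icc 1 N, fourier k ((n * θ : ℝ) : 𝕋)) / (N : ℂ))
          atTop (nhds (∫ x, fourier k x ∂μ))
        rw [h2]
        exact weyl_exp θ hθ k hk
    | zero => simp [hP, integral_zero, tendsto_const_nhds]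
    | add g₁ g₂ _ _ h1 h2 =>
      show Tendsto (fun N : ℕ => (∑ n ∈ Finset.Icc 1 N, (g₁ + g₂) ((n * θ : ℝ) : 𝕋)) / (N : ℂ))
        atTop (nhds (∫ x, (g₁ + g₂) x ∂μ))
      have : (∫ x, (g₁ + g₂) x ∂μ) = (∫ x, g₁ x ∂μ) + ∫ x, g₂ x ∂μ := by
        simp only [ContinuousMap.add_apply]
        exact integral_add (integrable_cont g₁) (integrable_cont g₂)
      rw [this]
      have := Tendsto.add h1 h2
      refine this.congr fun N => ?_
      simp [Finset.sum_add_distrib, add_div]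
    | smul c g _ hg =>
      show Tendsto (fun N : ℕ => (∑ n ∈ Finset.Icc 1 N, (c • g) ((n * θ : ℝ) : 𝕋)) / (N : ℂ))
        atTop (nhds (∫ x, (c • g) x ∂μ))
      have : (∫ x, (c • g) x ∂μ) = c • ∫ x, g x ∂μ := by
        simp only [ContinuousMap.smul_apply]
        exact integral_smul c _
      rw [this]
      have := hg.const_mul c
      refine this.congr fun N => ?_
      simp only [ContinuousMap.smul_apply, smul_eq_mul]
      rw [← Finset.mul_sum, mul_div_assoc]
  -- density
  rw [Metric.tendsto_atTop]
  intro ε hε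
  have hf : f ∈ (Submodule.span ℂ (Set.range (@fourier (2*π)))).topologicalClosure := by
    rw [span_fourier_closure_eq_top]; trivial
  have hf2 : f ∈ closure ((Submodule.span ℂ (Set.range (@fourier (2*π)))) : Set C(𝕋, ℂ)) := by
    rw [← Submodule.topologicalClosure_coe]; exact hf
  rw [Metric.mem_closure_iff] at hf2
  obtain ⟨g, hgmem, hgdist⟩ := hf2 (ε/3) (by linarith)
  have hg := hspan g hgmem
  rw [hP, Metric.tendsto_atTop] at hg
  obtain ⟨N₀, hN₀⟩ := hg (ε/3) (by linarith)
  refine ⟨max N₀ 1, fun N hN => ?_⟩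
  have hN1 : 1 ≤ N := le_trans (le_max_right _ _) hN
  have hNpos : (0:ℝ) < N := by exact_mod_cast hN1
  have hdist1 : dist ((∑ n ∈ Finset.Icc 1 N, f ((n * θ : ℝ) : 𝕋)) / (N : ℂ))
      ((∑ n ∈ Finset.Icc 1 N, g ((n * θ : ℝ) : 𝕋)) / (N : ℂ)) ≤ dist f g := by
    rw [dist_eq_norm, div_sub_div_same, ← Finset.sum_sub_distrib, norm_div]
    have hb : ‖∑ n ∈ Finset.Icc 1 N, (f ((n * θ : ℝ) : 𝕋) - g ((n * θ : ℝ) : 𝕋))‖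
        ≤ ∑ n ∈ Finset.Icc 1 N, dist f g := by
      refine (norm_sum_le _ _).trans (Finset.sum_le_sum fun n _ => ?_)
      rw [← dist_eq_norm]
      exact ContinuousMap.dist_apply_le_dist _
    rw [Finset.sum_const, Nat.card_Icc] at hb
    simp only [Complex.norm_natCast]
    rw [div_le_iff₀ hNpos]
    refine hb.trans ?_
    have : ((N + 1 - 1 : ℕ) : ℝ) = (N : ℝ) := by simp
    rw [nsmul_eq_mul, this]
    nlinarith [dist_nonneg (x := f) (y := g)]
  have hdist2 : dist (∫ x, g x ∂μ) (∫ x, f x ∂μ) ≤ dist f g := by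
    rw [dist_eq_norm, ← integral_sub (integrable_cont g) (integrable_cont f)]
    refine (norm_integral_le_integral_norm _).trans ?_
    have : ∀ x : 𝕋, ‖g x - f x‖ ≤ dist f g := fun x => by
      rw [← dist_eq_norm, dist_comm]
      exact ContinuousMap.dist_apply_le_dist _
    calc ∫ x, ‖g x - f x‖ ∂μ ≤ ∫ _x, dist f g ∂μ := by
          refine integral_mono ((integrable_cont (g - f)).norm.congr ?_) (integrable_const _) this
          filter_upwards with x
          simp
      _ = dist f g := by simp [μ]
  calc dist ((∑ n ∈ Finset.Icc 1 N, f ((n * θ : ℝ) : 𝕋)) / (N : ℂ)) (∫ x, f x ∂μ)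
      ≤ dist ((∑ n ∈ Finset.Icc 1 N, f ((n * θ : ℝ) : 𝕋)) / (N : ℂ))
          ((∑ n ∈ Finset.Icc 1 N, g ((n * θ : ℝ) : 𝕋)) / (N : ℂ))
        + dist ((∑ n ∈ Finset.Icc 1 N, g ((n * θ : ℝ) : 𝕋)) / (N : ℂ)) (∫ x, g x ∂μ)
        + dist (∫ x, g x ∂μ) (∫ x, f x ∂μ) := dist_triangle4 _ _ _ _
    _ < ε/3 + ε/3 + ε/3 := by
        have h1 := hN₀ N (le_trans (le_max_left _ _) hN)
        have := hdist1.trans_lt hgdist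
        have := hdist2.trans_lt hgdist
        gcongr
    _ = ε := by ring

lemma weyl_continuous_real (θ : ℝ) (hθ : Irrational (θ / π)) (f : C(𝕋, ℝ)) :
    Tendsto (fun N : ℕ => (∑ n ∈ Finset.Icc 1 N, f ((n * θ : ℝ) : 𝕋)) / (N : ℝ))
      atTop (nhds (∫ x, f x ∂(@AddCircle.haarAddCircle (2*π) _))) := by
  set μ := @AddCircle.haarAddCircle (2*π) _
  set F : C(𝕋, ℂ) := ⟨fun x => (f x : ℂ), Complex.continuous_ofReal.comp f.continuous⟩ with hF
  have h := (Complex.continuous_re.tendsto _).comp (weyl_continuous θ hθ F)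
  have h1 : (∫ x, F x ∂μ).re = ∫ x, f x ∂μ := by
    have : (∫ x, F x ∂μ) = ((∫ x, f x ∂μ : ℝ) : ℂ) := integral_ofReal
    rw [this, Complex.ofReal_re]
  rw [h1] at h
  refine h.congr fun N => ?_
  show ((∑ n ∈ Finset.Icc 1 N, F ((n * θ : ℝ) : 𝕋)) / (N : ℂ)).re = _
  have : (∑ n ∈ Finset.Icc 1 N, F ((n * θ : ℝ) : 𝕋))
      = ((∑ n ∈ Finset.Icc 1 N, f ((n * θ : ℝ) : 𝕋) : ℝ) : ℂ) := by
    rw [Complex.ofReal_sum]; rfl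
  rw [this, ← Complex.ofReal_natCast, ← Complex.ofReal_div, Complex.ofReal_re]

def cosC : C(𝕋, ℝ) :=
  ⟨Real.cos_periodic.lift, by
    rw [continuous_coinduced_dom]
    exact Real.continuous_cos⟩

@[simp] lemma cosC_coe (x : ℝ) : cosC (x : 𝕋) = Real.cos x :=
  Real.cos_periodic.lift_coe x

lemma haar_measure_S (a b : ℝ) (ha : -1 ≤ a) (hab : a ≤ b) (hb : b ≤ 1) :
    (@AddCircle.haarAddCircle (2*π) _) (cosC ⁻¹' Icc a b)
      = ENNReal.ofReal ((arcsin b - arcsin a) / π) := by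
  set μ := @AddCircle.haarAddCircle (2*π) _
  set S : Set 𝕋 := cosC ⁻¹' Icc a b with hS
  have hmeas : MeasurableSet S := (isClosed_Icc.preimage cosC.continuous).measurableSet
  set c₁ := Real.arccos a with hc₁
  set c₂ := Real.arccos b with hc₂
  have ha1 : -1 ≤ b := le_trans ha hab
  have hb1 : a ≤ 1 := le_trans hab hb
  have harccos_mono : ∀ x y : ℝ, x ≤ y → Real.arccos y ≤ Real.arccos x := by
    intro x y h
    rw [Real.arccos, Real.arccos]
    have := Real.monotone_arcsin h
    linarith
  have hc21 : c₂ ≤ c₁ := harccos_mono a b hab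
  have hc2nn : 0 ≤ c₂ := Real.arccos_nonneg b
  have hc1pi : c₁ ≤ π := Real.arccos_le_pi a
  have hπ : (0:ℝ) < π := Real.pi_pos
  -- the preimage in the fundamental domain
  have hpre : ∀ x : ℝ, ((x : 𝕋) ∈ S) ↔ Real.cos x ∈ Icc a b := by
    intro x; rw [hS, mem_preimage, cosC_coe]
  set P : Set ℝ := (QuotientAddGroup.mk ⁻¹' S) ∩ Ioc (-π) (-π + 2*π) with hPdef
  have hvolS : (volume : Measure 𝕋) S = volume P :=
    AddCircle.add_projection_respects_measure (T := 2*π) (-π) hmeas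
  set A1 : Set ℝ := Ioo (-c₁) (-c₂)
  set A2 : Set ℝ := Icc c₂ c₁
  have hsub1 : A1 ∪ A2 ⊆ P := by
    rintro x (hx | hx)
    · obtain ⟨h1, h2⟩ := hx
      constructor
      · rw [mem_preimage, hpre, ← Real.cos_neg]
        constructor
        · have := Real.cos_le_cos_of_nonneg_of_le_pi (Real.arccos_nonneg b)
            hc1pi (le_of_lt (by linarith)) -- cos c₁ ≤ cos (-x)? need right form
          -- cos c₁ ≤ cos (−x) : apply with x := −x, y := c₁
          have h3 : Real.cos c₁ ≤ Real.cos (-x) :=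
            Real.cos_le_cos_of_nonneg_of_le_pi (by linarith) hc1pi (by linarith)
          rwa [hc₁, Real.cos_arccos ha hb1] at h3
        · have h3 : Real.cos (-x) ≤ Real.cos c₂ :=
            Real.cos_le_cos_of_nonneg_of_le_pi hc2nn (by linarith) (by linarith)
          rwa [hc₂, Real.cos_arccos ha1 hb] at h3
      · constructor
        · linarith
        · linarith
    · obtain ⟨h1, h2⟩ := hx
      constructor
      · rw [mem_preimage, hpre]
        constructor
        · have h3 : Real.cos c₁ ≤ Real.cos x :=
            Real.cos_le_cos_of_nonneg_of_le_pi (by linarith) hc1pi (by linarith)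
          rwa [hc₁, Real.cos_arccos ha hb1] at h3
        · have h3 : Real.cos x ≤ Real.cos c₂ :=
            Real.cos_le_cos_of_nonneg_of_le_pi hc2nn (by linarith) (by linarith)
          rwa [hc₂, Real.cos_arccos ha1 hb] at h3
      · constructor
        · linarith
        · linarith
  set B1 : Set ℝ := Icc (-c₁) (-c₂)
  have hsub2 : P ⊆ B1 ∪ A2 := by
    rintro x ⟨hx, hx1, hx2⟩
    rw [mem_preimage, hpre] at hx
    obtain ⟨hxa, hxb⟩ := hx
    rcases le_or_gt 0 x with h0 | h0
    · right
      have hxpi : x ≤ π := by linarith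
      have e1 : Real.arccos (Real.cos x) = x := Real.arccos_cos h0 hxpi
      constructor
      · rw [hc₂, ← e1]; exact harccos_mono _ _ hxb
      · rw [hc₁, ← e1]; exact harccos_mono _ _ hxa
    · left
      have h0' : 0 ≤ -x := by linarith
      have hxpi : -x ≤ π := by linarith
      have e1 : Real.arccos (Real.cos (-x)) = -x := Real.arccos_cos h0' hxpi
      rw [Real.cos_neg] at e1
      constructor
      · have : c₁ ≥ -x := by rw [hc₁, ← e1]; exact harccos_mono _ _ hxa
        linarith
      · have : c₂ ≤ -x := by rw [hc₂, ← e1]; exact harccos_mono _ _ hxb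
        linarith
  have hvol1 : volume (A1 ∪ A2) = ENNReal.ofReal (c₁ - c₂) + ENNReal.ofReal (c₁ - c₂) := by
    rw [measure_union ?_ measurableSet_Icc]
    · rw [Real.volume_Ioo, Real.volume_Icc]
      congr 1 <;> ring_nf
    · rw [Set.disjoint_left]
      rintro x ⟨_, h2⟩ ⟨h3, _⟩
      linarith
  have hvol2 : volume (B1 ∪ A2) ≤ ENNReal.ofReal (c₁ - c₂) + ENNReal.ofReal (c₁ - c₂) := by
    refine (measure_union_le _ _).trans ?_
    rw [Real.volume_Icc, Real.volume_Icc]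
    apply le_of_eq
    congr 1 <;> ring_nf
  have hvolP : volume P = ENNReal.ofReal (c₁ - c₂) + ENNReal.ofReal (c₁ - c₂) := by
    refine le_antisymm ((measure_mono hsub2).trans hvol2) ?_
    rw [← hvol1]
    exact measure_mono hsub1
  -- convert to haar measure
  have hsmul : (volume : Measure 𝕋) S = ENNReal.ofReal (2*π) * μ S := by
    rw [AddCircle.volume_eq_smul_haarAddCircle]
    rfl
  have harc : c₁ - c₂ = Real.arcsin b - Real.arcsin a := by
    rw [hc₁, hc₂, Real.arccos, Real.arccos]; ring
  have h2π0 : ENNReal.ofReal (2*π) ≠ 0 := by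
    simp [ENNReal.ofReal_eq_zero]; positivity
  have hμS : μ S = volume P / ENNReal.ofReal (2*π) := by
    rw [ENNReal.eq_div_iff h2π0 ENNReal.ofReal_ne_top, ← hsmul, hvolS]
  rw [hμS, hvolP, harc]
  have hΔ : 0 ≤ Real.arcsin b - Real.arcsin a := by
    have := Real.monotone_arcsin hab
    linarith
  rw [← ENNReal.ofReal_add hΔ hΔ, ← ENNReal.ofReal_div_of_pos (by positivity)]
  congr 1
  field_simp
  ring


lemma integrable_cont_real (f : C(𝕋, ℝ)) : Integrable f (@AddCircle.haarAddCircle (2*π) _) :=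
  f.continuous.integrable_of_hasCompactSupport (HasCompactSupport.of_compactSpace f)

theorem cos_n_theta_arcsine_distribution (θ : ℝ) (hθ : Irrational (θ / π)) :
    ∀ a b : ℝ, -1 ≤ a → a ≤ b → b ≤ 1 →
      Tendsto (fun N : ℕ =>
          ((Finset.Icc 1 N).filter (fun n : ℕ => Real.cos (n * θ) ∈ Icc a b)).card / (N : ℝ))
        atTop (nhds ((Real.arcsin b - Real.arcsin a) / π)) := by
  intro a b ha hab hb
  set μ := @AddCircle.haarAddCircle (2*π) _
  set S : Set 𝕋 := cosC ⁻¹' Icc a b with hSdef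
  set L : ℝ := (Real.arcsin b - Real.arcsin a) / π with hL
  have hπ : (0:ℝ) < π := Real.pi_pos
  have hL0 : 0 ≤ L := by
    have := Real.monotone_arcsin hab
    rw [hL]
    exact div_nonneg (by linarith) hπ.le
  have hμS : μ S = ENNReal.ofReal L := haar_measure_S a b ha hab hb
  have hSclosed : IsClosed S := isClosed_Icc.preimage cosC.continuous
  have hSmeas : MeasurableSet S := hSclosed.measurableSet
  -- interior of S has the same measure
  have hVopen : IsOpen (interior S) := isOpen_interior
  have hμV : μ (interior S) = ENNReal.ofReal L := by
    refine le_antisymm ?_ ?_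
    · rw [← hμS]; exact measure_mono interior_subset
    · rw [← hμS]
      have hdiff : S \ interior S ⊆ cosC ⁻¹' (Icc a a) ∪ cosC ⁻¹' (Icc b b) := by
        rintro x ⟨hxS, hxV⟩
        by_contra hcon
        simp only [mem_union, mem_preimage, Icc_self, mem_singleton_iff] at hcon
        push_neg at hcon
        have h1 : cosC x ∈ Ioo a b := by
          rcases hSdef ▸ hxS with ⟨h2, h3⟩
          rw [mem_preimage] at hxS
          exact ⟨lt_of_le_of_ne hxS.1 (Ne.symm hcon.1), lt_of_le_of_ne hxS.2 hcon.2⟩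
        exact hxV (mem_of_mem_of_subset
          (show x ∈ cosC ⁻¹' Ioo a b from h1)
          (interior_maximal (fun y hy => ⟨le_of_lt hy.1, le_of_lt hy.2⟩)
            (isOpen_Ioo.preimage cosC.continuous)))
      have hnull : μ (S \ interior S) = 0 := by
        refine measure_mono_null hdiff ?_
        refine measure_union_null ?_ ?_
        · rw [haar_measure_S a a ha le_rfl (le_trans hab hb)]; simp
        · rw [haar_measure_S b b (le_trans ha hab) le_rfl hb]; simp
      calc μ S ≤ μ (interior S ∪ S \ interior S) := measure_mono (fun x hx => by
              by_cases h : x ∈ interior S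
              · exact Or.inl h
              · exact Or.inr ⟨hx, h⟩)
        _ ≤ μ (interior S) + μ (S \ interior S) := measure_union_le _ _
        _ = μ (interior S) := by rw [hnull, add_zero]
  -- membership reformulation
  have hmem : ∀ n : ℕ, (Real.cos (n * θ) ∈ Icc a b) ↔ (((n * θ : ℝ) : 𝕋) ∈ S) := by
    intro n
    rw [hSdef, mem_preimage, cosC_coe]
  -- main estimate
  rw [Metric.tendsto_atTop]
  intro ε hε
  have hε4 : ENNReal.ofReal (ε/4) ≠ 0 := by
    simp [ENNReal.ofReal_eq_zero]; linarith
  -- upper continuous function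
  obtain ⟨U, hSU, hUopen, hμU⟩ := Set.exists_isOpen_lt_add S (measure_ne_top μ S) hε4
  obtain ⟨f, hf0, hf1, hf01⟩ := exists_continuous_zero_one_of_isCompact
    (hUopen.isClosed_compl.isCompact) hSclosed
    (disjoint_compl_left_iff.mpr hSU)
  have hμU' : (μ U).toReal ≤ L + ε/4 := by
    have h1 : μ U ≤ ENNReal.ofReal (L + ε/4) := by
      rw [ENNReal.ofReal_add hL0 (by linarith), ← hμS]
      exact le_of_lt hμU
    have := ENNReal.toReal_mono ENNReal.ofReal_ne_top h1
    rwa [ENNReal.toReal_ofReal (by linarith)] at this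
  have hintf : ∫ x, f x ∂μ ≤ L + ε/4 := by
    refine le_trans ?_ hμU'
    have h1 : ∫ x, f x ∂μ ≤ ∫ x, U.indicator (fun _ => (1:ℝ)) x ∂μ := by
      refine integral_mono (integrable_cont_real f)
        ((integrable_const (1:ℝ)).indicator hUopen.measurableSet) ?_
      intro x
      by_cases hx : x ∈ U
      · rw [indicator_of_mem hx]; exact (hf01 x).2
      · rw [indicator_of_notMem hx]
        have : f x = 0 := by rw [hf0 (by simpa using hx)]; rfl
        rw [this]
      
    rw [integral_indicator_const (1:ℝ) hUopen.measurableSet] at h1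
    simpa [measureReal_def] using h1
  -- lower continuous function
  obtain ⟨F, hFV, hFclosed, hμF⟩ := hVopen.measurableSet.exists_isClosed_lt_add
    (measure_ne_top μ _) hε4
  obtain ⟨g, hg0, hg1, hg01⟩ := exists_continuous_zero_one_of_isCompact
    (hVopen.isClosed_compl.isCompact) hFclosed
    (disjoint_compl_left_iff.mpr hFV)
  have hμF' : L - ε/4 ≤ (μ F).toReal := by
    have h1 : μ (interior S) ≤ μ F + ENNReal.ofReal (ε/4) := le_of_lt hμF
    rw [hμV] at h1
    have h2 := ENNReal.toReal_mono (by finiteness) h1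
    rw [ENNReal.toReal_add (measure_ne_top μ F) ENNReal.ofReal_ne_top,
      ENNReal.toReal_ofReal hL0, ENNReal.toReal_ofReal (by linarith)] at h2
    linarith
  have hintg : L - ε/4 ≤ ∫ x, g x ∂μ := by
    refine le_trans hμF' ?_
    have h1 : ∫ x, F.indicator (fun _ => (1:ℝ)) x ∂μ ≤ ∫ x, g x ∂μ := by
      refine integral_mono ((integrable_const (1:ℝ)).indicator hFclosed.measurableSet)
        (integrable_cont_real g) ?_
      intro x
      by_cases hx : x ∈ F
      · rw [indicator_of_mem hx, hg1 hx, Pi.one_apply]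
      · rw [indicator_of_notMem hx]; exact (hg01 x).1
    rw [integral_indicator_const (1:ℝ) hFclosed.measurableSet] at h1
    simpa [measureReal_def] using h1
  -- counting bounds
  have hcount_ub : ∀ N : ℕ,
      (((Finset.Icc 1 N).filter (fun n : ℕ => Real.cos (n * θ) ∈ Icc a b)).card : ℝ)
        ≤ ∑ n ∈ Finset.Icc 1 N, f ((n * θ : ℝ) : 𝕋) := by
    intro N
    rw [Finset.card_filter]
    push_cast
    refine Finset.sum_le_sum fun n _ => ?_
    by_cases hn : Real.cos (n * θ) ∈ Icc a b
    · rw [if_pos hn]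
      have : ((n * θ : ℝ) : 𝕋) ∈ S := (hmem n).mp hn
      rw [hf1 this, Pi.one_apply]
    · rw [if_neg hn]
      exact (hf01 _).1
  have hcount_lb : ∀ N : ℕ,
      (∑ n ∈ Finset.Icc 1 N, g ((n * θ : ℝ) : 𝕋))
        ≤ (((Finset.Icc 1 N).filter (fun n : ℕ => Real.cos (n * θ) ∈ Icc a b)).card : ℝ) := by
    intro N
    rw [Finset.card_filter]
    push_cast
    refine Finset.sum_le_sum fun n _ => ?_
    by_cases hn : Real.cos (n * θ) ∈ Icc a b
    · rw [if_pos hn]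
      exact (hg01 _).2
    · rw [if_neg hn]
      have hnS : ((n * θ : ℝ) : 𝕋) ∉ S := fun h => hn ((hmem n).mpr h)
      have : ((n * θ : ℝ) : 𝕋) ∈ (interior S)ᶜ := fun h => hnS (interior_subset h)
      rw [show g ((n * θ : ℝ) : 𝕋) = 0 from by rw [hg0 this]; rfl]
  -- convergence of the two averages
  have hWf := weyl_continuous_real θ hθ f
  have hWg := weyl_continuous_real θ hθ g
  rw [Metric.tendsto_atTop] at hWf hWg
  obtain ⟨N₁, hN₁⟩ := hWf (ε/4) (by linarith)
  obtain ⟨N₂, hN₂⟩ := hWg (ε/4) (by linarith)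
  refine ⟨max (max N₁ N₂) 1, fun N hN => ?_⟩
  have hN1' : N₁ ≤ N := le_trans (le_trans (le_max_left _ _) (le_max_left _ _)) hN
  have hN2' : N₂ ≤ N := le_trans (le_trans (le_max_right _ _) (le_max_left _ _)) hN
  have hNpos : (0:ℝ) < N := by
    have : 1 ≤ N := le_trans (le_max_right _ _) hN
    exact_mod_cast this
  have h1 := hN₁ N hN1'
  have h2 := hN₂ N hN2'
  rw [Real.dist_eq, abs_sub_lt_iff] at h1 h2 ⊢
  set c : ℝ := (((Finset.Icc 1 N).filter (fun n : ℕ => Real.cos (n * θ) ∈ Icc a b)).card : ℝ)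
  have hub : c / N ≤ (∑ n ∈ Finset.Icc 1 N, f ((n * θ : ℝ) : 𝕋)) / N := by
    gcongr
    exact hcount_ub N
  have hlb : (∑ n ∈ Finset.Icc 1 N, g ((n * θ : ℝ) : 𝕋)) / N ≤ c / N := by
    gcongr
    exact hcount_lb N
  constructor
  · have : (∑ n ∈ Finset.Icc 1 N, f ((n * θ : ℝ) : 𝕋)) / N < (∫ x, f x ∂μ) + ε/4 := by
      linarith [h1.1]
    nlinarith [hub]
  · have : (∫ x, g x ∂μ) - ε/4 < (∑ n ∈ Finset.Icc 1 N, g ((n * θ : ℝ) : 𝕋)) / N := by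
      linarith [h2.2]
    nlinarith [hlb]

end
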